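/- Let D > 0, t > 0, S > 0 and ρ ≥ 0 be real numbers. Then ∫₀^S r · exp(-r²/(4Dt)) · (∑_{k=0}^∞ ((ρ·r)/(4Dt))^{2k} / (k!)²) dr = 2Dt · ∑_{k=0}^∞ (ρ²/(4Dt))^k / (k!)² · γ(k+1, S²/(4Dt)); in particular, the series under the integral may be integrated term by term over [0, S]. -/

import Mathlib

open MeasureTheory Real

/-- The lower incomplete Gamma function `γ(a, x) = ∫₀ˣ y^(a-1) exp(-y) dy`. -/
noncomputable def lowerGamma (a x : ℝ) : ℝ := ∫ y in (0:ℝ)..x, y^(a-1) * Real.exp (-y)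

lemma lowerGamma_nat (k : ℕ) (x : ℝ) :
    lowerGamma (k+1) x = ∫ y in (0:ℝ)..x, y^k * Real.exp (-y) := by
  unfold lowerGamma
  congr 1
  ext y
  rw [add_sub_cancel_right, Real.rpow_natCast]

lemma per_term (c S : ℝ) (hc : 0 < c) (hS : 0 < S) (k : ℕ) :
    (∫ r in (0:ℝ)..S, (2*r/c) * ((r^2/c)^k * Real.exp (-(r^2/c))))
      = lowerGamma (k+1) (S^2/c) := by
  rw [lowerGamma_nat]
  have h := intervalIntegral.integral_comp_smul_deriv
    (a := (0:ℝ)) (b := S) (f := fun r => r^2/c) (f' := fun r => 2*r/c)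
    (g := fun y => y^k * Real.exp (-y))
    (fun x _ => by simpa [mul_comm] using (hasDerivAt_pow 2 x).div_const c)
    (by fun_prop) (by fun_prop)
  simpa [Function.comp, smul_eq_mul, zero_pow] using h

theorem radial_integral_series (D t S ρ : ℝ)
    (hD : 0 < D) (ht : 0 < t) (hS : 0 < S) (hρ : 0 ≤ ρ) :
    (∫ r in (0:ℝ)..S,
        r * Real.exp (-(r^2 / (4*D*t))) *
          ∑' k : ℕ, ((ρ*r) / (4*D*t))^(2*k) / ((Nat.factorial k : ℝ))^2) =
      2*D*t * ∑' k : ℕ, (ρ^2 / (4*D*t))^k / ((Nat.factorial k : ℝ))^2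
          * lowerGamma (k+1) (S^2 / (4*D*t)) := by
  set c : ℝ := 4*D*t with hc_def
  have hc : 0 < c := by positivity
  set F : ℕ → ℝ → ℝ := fun k r =>
    r * Real.exp (-(r^2 / c)) * (((ρ*r) / c)^(2*k) / ((Nat.factorial k : ℝ))^2) with hF
  -- rewrite integrand as tsum
  have h1 : ∀ r : ℝ,
      r * Real.exp (-(r^2 / c)) * ∑' k : ℕ, ((ρ*r) / c)^(2*k) / ((Nat.factorial k : ℝ))^2
        = ∑' k : ℕ, F k r := by
    intro r
    rw [← tsum_mul_left]
  -- key pointwise factorization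
  have hfac : ∀ (k : ℕ) (r : ℝ), F k r =
      ((ρ^2/c)^k / ((Nat.factorial k : ℝ))^2 * (c/2)) *
        ((2*r/c) * ((r^2/c)^k * Real.exp (-(r^2/c)))) := by
    intro k r
    have hp : ((ρ*r)/c)^(2*k) = (ρ^2/c)^k * (r^2/c)^k := by
      rw [pow_mul, ← mul_pow]
      congr 1
      field_simp
    simp only [hF, hp]
    have hk : ((Nat.factorial k : ℝ))^2 ≠ 0 := by positivity
    field_simp
  -- per-term integral value
  have hval : ∀ k : ℕ, (∫ r in (0:ℝ)..S, F k r) =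
      (ρ^2/c)^k / ((Nat.factorial k : ℝ))^2 * (c/2) * lowerGamma (k+1) (S^2/c) := by
    intro k
    simp_rw [hfac k]
    rw [intervalIntegral.integral_const_mul, per_term c S hc hS k]
  -- integrability
  have hFcont : ∀ k : ℕ, Continuous (F k) := by
    intro k; simp only [hF]; fun_prop
  have hFint : ∀ k : ℕ, Integrable (F k) (volume.restrict (Set.Ioc 0 S)) := by
    intro k
    exact ((hFcont k).integrableOn_Ioc : IntegrableOn _ (Set.Ioc 0 S) volume)
  -- norm bound on Ioc 0 S
  have hbound : ∀ (k : ℕ) (r : ℝ), r ∈ Set.Ioc (0:ℝ) S →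
      ‖F k r‖ ≤ S * (((ρ*S)/c)^(2*k) / ((Nat.factorial k : ℝ))^2) := by
    intro k r hr
    obtain ⟨hr0, hrS⟩ := hr
    have h1 : (0:ℝ) ≤ r := hr0.le
    have hexp : Real.exp (-(r^2/c)) ≤ 1 := by
      apply Real.exp_le_one_iff.mpr
      have : (0:ℝ) ≤ r^2/c := by positivity
      linarith
    have hnn : 0 ≤ F k r := by
      simp only [hF]; positivity
    rw [Real.norm_of_nonneg hnn]
    simp only [hF]
    have hpow : ((ρ*r)/c)^(2*k) ≤ ((ρ*S)/c)^(2*k) := by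
      gcongr <;> first | positivity | exact hrS
    calc r * Real.exp (-(r^2/c)) * (((ρ*r)/c)^(2*k) / ((Nat.factorial k : ℝ))^2)
        ≤ S * 1 * (((ρ*S)/c)^(2*k) / ((Nat.factorial k : ℝ))^2) := by
          gcongr <;> first | positivity | exact hrS | exact hexp | exact hpow
      _ = S * (((ρ*S)/c)^(2*k) / ((Nat.factorial k : ℝ))^2) := by ring
  -- summability of the bounding series
  have hsum0 : Summable (fun k : ℕ => S * S * (((ρ*S)/c)^(2*k) / ((Nat.factorial k : ℝ))^2)) := by
    apply Summable.mul_left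
    apply Summable.of_nonneg_of_le (fun k => by positivity)
      (fun k => ?_) (Real.summable_pow_div_factorial (((ρ*S)/c)^2))
    rw [pow_mul]
    have h1 : (1:ℝ) ≤ (Nat.factorial k : ℝ) := by
      exact_mod_cast Nat.one_le_iff_ne_zero.mpr (Nat.factorial_ne_zero k)
    have h2 : (Nat.factorial k : ℝ) ≤ ((Nat.factorial k : ℝ))^2 := by
      nlinarith
    gcongr <;> positivity
  -- summability of integrals of norms
  have hμ : volume (Set.Ioc (0:ℝ) S) < ⊤ := by simp
  have hsum : Summable (fun k : ℕ => ∫ r in Set.Ioc (0:ℝ) S, ‖F k r‖) := by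
    apply Summable.of_nonneg_of_le
      (fun k => integral_nonneg (fun r => norm_nonneg _)) (fun k => ?_) hsum0
    have := MeasureTheory.norm_setIntegral_le_of_norm_le_const (μ := volume)
      (f := fun r => ‖F k r‖) (s := Set.Ioc (0:ℝ) S)
      (C := S * (((ρ*S)/c)^(2*k) / ((Nat.factorial k : ℝ))^2)) hμ
      (fun r hr => by rw [norm_norm]; exact hbound k r hr)
    have hle : (∫ r in Set.Ioc (0:ℝ) S, ‖F k r‖)
        ≤ ‖∫ r in Set.Ioc (0:ℝ) S, ‖F k r‖‖ := le_abs_self _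
    calc (∫ r in Set.Ioc (0:ℝ) S, ‖F k r‖)
        ≤ S * (((ρ*S)/c)^(2*k) / ((Nat.factorial k : ℝ))^2)
          * (volume (Set.Ioc (0:ℝ) S)).toReal := hle.trans this
      _ ≤ S * S * (((ρ*S)/c)^(2*k) / ((Nat.factorial k : ℝ))^2) := by
          rw [Real.volume_Ioc, sub_zero, ENNReal.toReal_ofReal hS.le]
          exact le_of_eq (by ring)
  -- swap integral and sum
  have hswap : (∫ r in (0:ℝ)..S, ∑' k : ℕ, F k r) = ∑' k : ℕ, ∫ r in (0:ℝ)..S, F k r := by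
    rw [intervalIntegral.integral_of_le hS.le]
    rw [← MeasureTheory.integral_tsum_of_summable_integral_norm hFint hsum]
    congr 1
    ext k
    rw [intervalIntegral.integral_of_le hS.le]
  calc (∫ r in (0:ℝ)..S,
        r * Real.exp (-(r^2 / c)) * ∑' k : ℕ, ((ρ*r) / c)^(2*k) / ((Nat.factorial k : ℝ))^2)
      = ∫ r in (0:ℝ)..S, ∑' k : ℕ, F k r := by
        apply intervalIntegral.integral_congr
        intro r _
        exact h1 r
    _ = ∑' k : ℕ, ∫ r in (0:ℝ)..S, F k r := hswap
    _ = ∑' k : ℕ, (ρ^2/c)^k / ((Nat.factorial k : ℝ))^2 * (c/2) * lowerGamma (k+1) (S^2/c) := by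
        exact tsum_congr hval
    _ = 2*D*t * ∑' k : ℕ, (ρ^2/c)^k / ((Nat.factorial k : ℝ))^2 * lowerGamma (k+1) (S^2/c) := by
        rw [← tsum_mul_left]
        apply tsum_congr
        intro k
        have : c/2 = 2*D*t := by rw [hc_def]; ring
        rw [this]; ring
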